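/- Let α ∈ E with tr(α) ≠ 0, and set v := (1, α) and u₀ := (1, −ι(α)) in E². Then v and u₀ are orthogonal for the hyperbolic Hermitian form and form a basis of E², and the map sending λ ∈ E¹ := {λ ∈ E : λ·ι(λ) = 1} to the unique E-linear automorphism g_λ of E² with g_λ·v = v and g_λ·u₀ = λ·u₀ is a group isomorphism from E¹ onto the stabilizer {g ∈ GL₂(E) : ι(g)ᵗ w₂ g = w₂ and g·v = v}. (Thus the stabilizer of the character ψ_{[31];v_α} in U(1,1) for anisotropic v_α is isomorphic to U(1).) -/

import Mathlib

open Matrix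

/-- The hyperbolic Hermitian form on `E²` with Gram matrix `w₂ = [[0,1],[1,0]]`:
`⟨u, v⟩ = ι(u₁)v₂ + ι(u₂)v₁`. -/
def herm {E : Type*} [Field E] (ι : E →+* E) (u v : Fin 2 → E) : E :=
  ι (u 0) * v 1 + ι (u 1) * v 0

/-- `w₂ = [[0,1],[1,0]]`. -/
def w2 (E : Type*) [Field E] : Matrix (Fin 2) (Fin 2) E := !![0, 1; 1, 0]

/-- Let `α ∈ E` with `tr(α) ≠ 0`, `v = (1, α)`, `u₀ = (1, −ι(α))`. Then `v` and `u₀`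
are orthogonal for the hyperbolic Hermitian form and form a basis of `E²`, and
`λ ↦ g_λ` (where `g_λ` is the unique linear automorphism with `g_λ v = v`,
`g_λ u₀ = λ·u₀`) is a group isomorphism from `E¹ = {λ : λ·ι(λ) = 1}` onto the
stabilizer `{g ∈ U(w₂) : g·v = v}`. -/
theorem statement16 {E : Type*} [Field E] (htwo : (2 : E) ≠ 0)
    (ι : E →+* E) (hinv : ∀ x, ι (ι x) = x) (hni : ι ≠ RingHom.id E)
    (s : E) (hs0 : s ≠ 0) (hss : ι s = -s)
    (α : E) (hα : α + ι α ≠ 0) :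
    herm ι ![1, α] ![1, -ι α] = 0 ∧ herm ι ![1, -ι α] ![1, α] = 0 ∧
    LinearIndependent E ![![(1 : E), α], ![1, -ι α]] ∧
    Submodule.span E ({![(1 : E), α], ![1, -ι α]} : Set (Fin 2 → E)) = ⊤ ∧
    ∃ Φ : E → Matrix (Fin 2) (Fin 2) E,
      -- `Φ l` is the linear automorphism `g_l` with `g_l v = v` and `g_l u₀ = l·u₀`
      (∀ l : E, l * ι l = 1 → IsUnit (Φ l) ∧
        (Φ l).mulVec ![1, α] = ![1, α] ∧
        (Φ l).mulVec ![1, -ι α] = l • ![1, -ι α]) ∧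
      -- uniqueness of `g_l`
      (∀ l : E, l * ι l = 1 → ∀ g : Matrix (Fin 2) (Fin 2) E,
        g.mulVec ![1, α] = ![1, α] → g.mulVec ![1, -ι α] = l • ![1, -ι α] →
        g = Φ l) ∧
      -- `Φ` is a group homomorphism on `E¹`
      (∀ l m : E, l * ι l = 1 → m * ι m = 1 → Φ (l * m) = Φ l * Φ m) ∧
      -- `Φ` is injective on `E¹`
      (∀ l m : E, l * ι l = 1 → m * ι m = 1 → Φ l = Φ m → l = m) ∧
      -- `Φ` maps `E¹` into the stabilizer of `v` in `U(w₂)`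
      (∀ l : E, l * ι l = 1 →
        ((Φ l).map ι)ᵀ * w2 E * Φ l = w2 E ∧ (Φ l).mulVec ![1, α] = ![1, α]) ∧
      -- `Φ` maps `E¹` onto the stabilizer of `v` in `U(w₂)`
      (∀ g : Matrix (Fin 2) (Fin 2) E, IsUnit g →
        (g.map ι)ᵀ * w2 E * g = w2 E → g.mulVec ![1, α] = ![1, α] →
        ∃ l : E, l * ι l = 1 ∧ g = Φ l) := by
  have ht0 : α + ι α ≠ 0 := hα
  have hιt : ι (α + ι α) = α + ι α := by rw [map_add, hinv, add_comm]
  -- the span fact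
  have hspan : Submodule.span E ({![(1 : E), α], ![1, -ι α]} : Set (Fin 2 → E)) = ⊤ := by
    rw [eq_top_iff]
    rintro x -
    have hx : x = ((ι α * x 0 + x 1) / (α + ι α)) • ![(1 : E), α] +
        ((α * x 0 - x 1) / (α + ι α)) • ![1, -ι α] := by
      funext i
      fin_cases i <;>
        · simp only [Fin.isValue, Pi.add_apply, Pi.smul_apply, Matrix.cons_val_zero,
            Matrix.cons_val_one, Matrix.head_cons, smul_eq_mul, Fin.zero_eta, Fin.mk_one]
          field_simp
          ring
    rw [hx]
    exact Submodule.add_mem _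
      (Submodule.smul_mem _ _ (Submodule.subset_span (Or.inl rfl)))
      (Submodule.smul_mem _ _ (Submodule.subset_span (Or.inr rfl)))
  -- definition of Φ
  set Φ : E → Matrix (Fin 2) (Fin 2) E := fun l =>
    (α + ι α)⁻¹ • !![ι α + l * α, 1 - l; α * ι α * (1 - l), α + l * ι α] with hΦdef
  -- key computation : Φ l fixes v and scales u₀ by l, for every l
  have key : ∀ l : E, (Φ l).mulVec ![1, α] = ![1, α] ∧
      (Φ l).mulVec ![1, -ι α] = l • ![1, -ι α] := by
    intro l
    constructor <;>
      · funext i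
        fin_cases i <;>
          · simp only [hΦdef, Matrix.mulVec, dotProduct, Fin.sum_univ_two,
              Matrix.smul_apply, Matrix.cons_val', Matrix.cons_val_zero, Matrix.cons_val_one,
              Matrix.head_cons, Matrix.empty_val', Matrix.cons_val_fin_one, Matrix.head_fin_const,
              smul_eq_mul, Pi.smul_apply, Matrix.of_apply, Fin.zero_eta, Fin.mk_one]
            field_simp
            ring
  -- uniqueness, for every l
  have huniq : ∀ l : E, ∀ g : Matrix (Fin 2) (Fin 2) E,
      g.mulVec ![1, α] = ![1, α] → g.mulVec ![1, -ι α] = l • ![1, -ι α] → g = Φ l := by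
    intro l g h1 h2
    apply Matrix.toLin'.injective
    apply LinearMap.ext_on hspan
    rintro x (rfl | rfl) <;>
      simp only [Matrix.toLin'_apply, h1, h2, (key l).1, (key l).2]
  -- Φ is multiplicative, for all l m
  have hmul : ∀ l m : E, Φ (l * m) = Φ l * Φ m := by
    intro l m
    refine (huniq (l * m) (Φ l * Φ m) ?_ ?_).symm
    · rw [← Matrix.mulVec_mulVec, (key m).1, (key l).1]
    · rw [← Matrix.mulVec_mulVec, (key m).2, Matrix.mulVec_smul, (key l).2,
        smul_smul, mul_comm]
  have hone : Φ 1 = 1 := by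
    refine (huniq 1 1 ?_ ?_).symm
    · rw [Matrix.one_mulVec]
    · rw [Matrix.one_mulVec, one_smul]
  -- units
  have hunit : ∀ l : E, l * ι l = 1 → IsUnit (Φ l) := by
    intro l hl
    have h1 : Φ l * Φ (ι l) = 1 := by rw [← hmul, hl, hone]
    exact ⟨⟨Φ l, Φ (ι l), h1, mul_eq_one_comm.mp h1⟩, rfl⟩
  -- unitarity preserves herm
  have hpres : ∀ g : Matrix (Fin 2) (Fin 2) E, (g.map ι)ᵀ * w2 E * g = w2 E →
      ∀ x y : Fin 2 → E, herm ι (g.mulVec x) (g.mulVec y) = herm ι x y := by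
    intro g hg x y
    have h00 := congrFun (congrFun hg 0) 0
    have h01 := congrFun (congrFun hg 0) 1
    have h10 := congrFun (congrFun hg 1) 0
    have h11 := congrFun (congrFun hg 1) 1
    simp only [w2, Matrix.mul_apply, Fin.sum_univ_two, Matrix.transpose_apply,
      Matrix.map_apply, Matrix.cons_val', Matrix.cons_val_zero, Matrix.cons_val_one,
      Matrix.head_cons, Matrix.empty_val', Matrix.cons_val_fin_one, Matrix.head_fin_const,
      Matrix.of_apply] at h00 h01 h10 h11
    simp only [herm, Matrix.mulVec, dotProduct, Fin.sum_univ_two, map_add, _root_.map_mul]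
    linear_combination ι (x 0) * y 0 * h00 + ι (x 0) * y 1 * h01 +
      ι (x 1) * y 0 * h10 + ι (x 1) * y 1 * h11
  -- unitarity of Φ l when l ι l = 1
  have hunitary : ∀ l : E, l * ι l = 1 → ((Φ l).map ι)ᵀ * w2 E * Φ l = w2 E := by
    intro l hl
    have hιinv : ι (α + ι α)⁻¹ = (α + ι α)⁻¹ := by rw [map_inv₀, hιt]
    funext i j
    have simp_entry : True := trivial
    fin_cases i <;> fin_cases j <;>
      simp only [hΦdef, w2, Matrix.mul_apply, Fin.sum_univ_two, Matrix.transpose_apply,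
          Matrix.map_apply, Matrix.smul_apply, smul_eq_mul, _root_.map_mul, map_add, map_sub,
          _root_.map_one, hinv, hιinv, Matrix.cons_val', Matrix.cons_val_zero, Matrix.cons_val_one,
          Matrix.head_cons, Matrix.empty_val', Matrix.cons_val_fin_one, Matrix.head_fin_const,
          Matrix.of_apply, Fin.zero_eta, Fin.mk_one] <;>
      field_simp [hinv]
    · linear_combination (-(α * ι α * (α + ι α))) * hl
    · linear_combination (ι α * (α + ι α)) * hl
    · linear_combination (α * (α + ι α)) * hl
    · linear_combination (-(α + ι α)) * hl
  refine ⟨?_, ?_, ?_, hspan, Φ, fun l hl => ⟨hunit l hl, key l⟩,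
    fun l _ => huniq l, fun l m _ _ => hmul l m, ?_, fun l hl => ⟨hunitary l hl, (key l).1⟩, ?_⟩
  · simp [herm]
  · simp [herm, hinv]
  · rw [linearIndependent_fin2]
    constructor
    · intro h
      have := congrFun h 0
      simp at this
    · intro a h
      have h0 := congrFun h 0
      have h1 := congrFun h 1
      simp only [Matrix.cons_val_zero, Matrix.cons_val_one, Matrix.head_cons, Pi.smul_apply,
        smul_eq_mul, mul_one] at h0 h1
      subst h0
      apply hα
      rw [one_mul] at h1
      linear_combination -h1
  · -- injectivity
    intro l m _ _ h
    have := congrFun ((key l).2.symm.trans (h ▸ (key m).2)) 0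
    simpa using this
  · -- surjectivity
    intro g _ hg hgv
    set w := g.mulVec ![1, -ι α] with hw
    have horth : herm ι ![(1 : E), α] w = 0 := by
      rw [hw, ← hgv, hpres g hg]
      simp [herm]
    have hw1 : w 1 = -ι α * w 0 := by
      simp only [herm, Matrix.cons_val_zero, Matrix.cons_val_one, Matrix.head_cons,
        _root_.map_one, one_mul] at horth
      linear_combination horth
    set l := w 0 with hl0
    have hwl : w = l • ![1, -ι α] := by
      funext i
      fin_cases i <;> simp [hw1, hl0, mul_comm]
    have hnorm : herm ι w w = herm ι ![(1 : E), -ι α] ![1, -ι α] := by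
      rw [hw, hpres g hg]
    have hll : l * ι l = 1 := by
      simp only [herm, hw1, Matrix.cons_val_zero, Matrix.cons_val_one, Matrix.head_cons,
        _root_.map_one, one_mul, map_neg, _root_.map_mul, hinv] at hnorm
      have : (l * ι l) * (α + ι α) = 1 * (α + ι α) := by
        ring_nf
        ring_nf at hnorm
        linear_combination -hnorm
      exact mul_right_cancel₀ ht0 this
    exact ⟨l, hll, huniq l g hgv (hw ▸ hwl)⟩
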